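/- The word w = x₁ x₂ x₁⁻¹ x₂⁻¹ x₃ x₂ x₁ x₂⁻¹ x₁⁻¹ x₃⁻¹ (the commutator ⁅⁅x₁, x₂⁆, x₃⁆) in the free group on three generators is a solution to the 1-out-of-3 picture-hanging puzzle of length 10, and every solution w' to the 1-out-of-3 puzzle has |w'| ≥ 10; hence the minimum length of a 1-out-of-3 solution is exactly 10. -/

import Mathlib

/-- The removal homomorphism: kills the generators with index in `S`. -/
def kill {n : ℕ} (S : Finset (Fin n)) : FreeGroup (Fin n) →* FreeGroup (Fin n) :=
  FreeGroup.lift fun i => if i ∈ S then 1 else FreeGroup.of i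

/-- `w` is a solution to the `k`-out-of-`n` picture-hanging puzzle (Demaine convention). -/
def IsSolution {n : ℕ} (k : ℕ) (w : FreeGroup (Fin n)) : Prop :=
  ∀ S : Finset (Fin n),
    (k ≤ S.card → kill S w = 1) ∧ (S.card < k → kill S w ≠ 1)

/-- The three generators of the free group `F₃`. -/
def x₁ : FreeGroup (Fin 3) := FreeGroup.of 0
def x₂ : FreeGroup (Fin 3) := FreeGroup.of 1
def x₃ : FreeGroup (Fin 3) := FreeGroup.of 2

open scoped commutatorElement

namespace PicHang

abbrev Ltr := Fin 3 × Bool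

def cnt (i : Fin 3) (L : List Ltr) : ℤ :=
  (L.map fun p => if p.1 = i then (if p.2 then (1:ℤ) else -1) else 0).sum

@[simp] lemma cnt_nil (i : Fin 3) : cnt i [] = 0 := rfl
@[simp] lemma cnt_cons (i : Fin 3) (p : Ltr) (L : List Ltr) :
    cnt i (p :: L) = (if p.1 = i then (if p.2 then (1:ℤ) else -1) else 0) + cnt i L := by
  simp [cnt]
@[simp] lemma cnt_append (i : Fin 3) (A B : List Ltr) :
    cnt i (A ++ B) = cnt i A + cnt i B := by simp [cnt]

lemma cnt_step {i : Fin 3} {L₁ L₂ : List Ltr} (h : FreeGroup.Red.Step L₁ L₂) :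
    cnt i L₁ = cnt i L₂ := by
  cases h with
  | @not _ _ x b => cases b <;> simp <;> split_ifs <;> ring

lemma cnt_red {i : Fin 3} {L₁ L₂ : List Ltr} (h : FreeGroup.Red L₁ L₂) :
    cnt i L₁ = cnt i L₂ := by
  induction h with
  | refl => rfl
  | tail _ hs ih => exact ih.trans (cnt_step hs)

lemma cnt_reduce (i : Fin 3) (L : List Ltr) : cnt i (FreeGroup.reduce L) = cnt i L :=
  (cnt_red (FreeGroup.reduce.red)).symm

lemma tot_le (pre : List Ltr) :
    (cnt 0 pre).natAbs + (cnt 1 pre).natAbs + (cnt 2 pre).natAbs ≤ pre.length ∧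
    ((cnt 0 pre).natAbs + (cnt 1 pre).natAbs + (cnt 2 pre).natAbs) % 2 = pre.length % 2 := by
  induction pre with
  | nil => simp
  | cons p L ih =>
    obtain ⟨j, b⟩ := p
    fin_cases j <;> cases b <;> simp only [cnt_cons, List.length_cons] <;>
      · simp only [Fin.isValue, if_true, if_false, Fin.ext_iff] <;> norm_num <;> omega

lemma cnt_filter (i j : Fin 3) (hj : j ≠ i) :
    ∀ L : List Ltr, cnt i (L.filter fun p => !(p.1 == j)) = cnt i L := by
  intro L
  induction L with
  | nil => rfl
  | cons p M ih =>
    rw [List.filter_cons]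
    by_cases hp : p.1 = j
    · rw [if_neg (by simp [hp]), cnt_cons, if_neg (by rw [hp]; exact fun h => hj h), zero_add, ih]
    · rw [if_pos (by simp [hp]), cnt_cons, cnt_cons, ih]

def cancels (x : Ltr) (L : List Ltr) : Bool :=
  match L with | [] => false | h :: _ => x.1 == h.1 && x.2 == !h.2

open FreeGroup

lemma reduce_length_le (L : List Ltr) : (reduce L).length ≤ L.length :=
  (Red.sublist (reduce.red)).length_le

lemma red_cons_of_red {x : Ltr} {L : List Ltr} (h : reduce L = L)
    (hc : cancels x L = false) : reduce (x :: L) = x :: L := by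
  rw [reduce.cons, h]
  cases L with
  | nil => rfl
  | cons hd tl =>
    simp only [cancels, Bool.and_eq_false_iff, beq_eq_false_iff_ne, ne_eq] at hc
    have : ¬(x.1 = hd.1 ∧ x.2 = !hd.2) := by
      rintro ⟨h1, h2⟩
      rcases hc with hc | hc <;> exact hc (by assumption)
    simp [this]

lemma red_cons_cancel {x : Ltr} {L : List Ltr} (h : reduce L = L)
    (hc : cancels x L = true) : reduce (x :: L) ≠ x :: L := by
  cases L with
  | nil => simp [cancels] at hc
  | cons hd tl =>
    simp only [cancels, Bool.and_eq_true, beq_iff_eq] at hc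
    rw [reduce.cons, h]
    simp only [hc.1, hc.2, and_self, if_true]
    intro heq
    have := congrArg List.length heq
    simp at this; omega

lemma red_of_red_cons {x : Ltr} {L : List Ltr} (h : reduce (x :: L) = x :: L) :
    reduce L = L := by
  rw [reduce.cons] at h
  cases hR : reduce L with
  | nil => rw [hR] at h; simp at h; simp [h]
  | cons hd tl =>
    rw [hR] at h
    have hlen : (hd :: tl).length ≤ L.length := hR ▸ reduce_length_le L
    by_cases hcase : x.1 = hd.1 ∧ x.2 = !hd.2
    · simp only [hcase, and_self, if_true] at h
      have := congrArg List.length h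
      simp at this hlen; omega
    · simp only [hcase, if_false] at h
      have := List.tail_eq_of_cons_eq h
      exact this

lemma red_append_right : ∀ (A B : List Ltr), reduce (A ++ B) = A ++ B → reduce B = B := by
  intro A
  induction A with
  | nil => intro B h; exact h
  | cons a A ih => intro B h; exact ih B (red_of_red_cons h)

def leafOK (L : List Ltr) : Bool :=
  decide (∃ i : Fin 3, FreeGroup.reduce (L.filter fun p => !(p.1 == i)) ≠ [])

def allLtrs : List Ltr := [(0,true),(0,false),(1,true),(1,false),(2,true),(2,false)]

lemma mem_allLtrs (x : Ltr) : x ∈ allLtrs := by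
  obtain ⟨i, b⟩ := x; fin_cases i <;> cases b <;> decide

def go : ℕ → List Ltr → Bool
  | 0, L => !(cnt 0 L == 0 && cnt 1 L == 0 && cnt 2 L == 0) || leafOK L
  | (r+1), L =>
      !(decide ((cnt 0 L).natAbs + (cnt 1 L).natAbs + (cnt 2 L).natAbs ≤ r+1) &&
        (((cnt 0 L).natAbs + (cnt 1 L).natAbs + (cnt 2 L).natAbs) % 2 == (r+1) % 2))
      || (allLtrs.all fun x => cancels x L || go r (x :: L))

lemma go_complete : ∀ (r : ℕ) (L : List Ltr), reduce L = L → go r L = true →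
    ∀ pre : List Ltr, pre.length = r → reduce (pre ++ L) = pre ++ L →
    (∀ i, cnt i (pre ++ L) = 0) → leafOK (pre ++ L) = true := by
  intro r
  induction r with
  | zero =>
    intro L _ hgo pre hlen _ hz
    have hpre : pre = [] := List.length_eq_zero_iff.mp hlen
    subst hpre
    simp only [List.nil_append] at hz ⊢
    rw [go] at hgo
    have h0 : (cnt 0 L == 0 && cnt 1 L == 0 && cnt 2 L == 0) = true := by
      simp only [Bool.and_eq_true, beq_iff_eq]
      exact ⟨⟨hz 0, hz 1⟩, hz 2⟩
    rw [h0] at hgo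
    simpa using hgo
  | succ r ih =>
    intro L hredL hgo pre hlen hredFull hz
    have hprene : pre ≠ [] := by intro h; subst h; simp at hlen
    obtain ⟨q, a, rfl⟩ := (List.eq_nil_or_concat' pre).resolve_left hprene
    have hassoc : (q ++ [a]) ++ L = q ++ (a :: L) := by simp
    rw [hassoc] at hredFull hz ⊢
    have hredaL : reduce (a :: L) = a :: L := red_append_right q _ hredFull
    have hcanc : cancels a L = false := by
      cases hc : cancels a L
      · rfl
      · exact absurd hredaL (red_cons_cancel hredL hc)
    have hqlen : q.length = r := by
      have := hlen; simp at this; omega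
    -- feasibility holds
    have hfeas : ((cnt 0 L).natAbs + (cnt 1 L).natAbs + (cnt 2 L).natAbs ≤ r+1) ∧
        ((cnt 0 L).natAbs + (cnt 1 L).natAbs + (cnt 2 L).natAbs) % 2 = (r+1) % 2 := by
      have hp := tot_le (q ++ [a])
      have hL : ∀ i : Fin 3, cnt i L = -cnt i (q ++ [a]) := by
        intro i
        have := hz i
        rw [show q ++ a :: L = (q ++ [a]) ++ L by simp, cnt_append] at this
        omega
      have hlen2 : (q ++ [a]).length = r + 1 := hlen
      rw [hL 0, hL 1, hL 2]
      simp only [Int.natAbs_neg]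
      omega
    rw [go] at hgo
    have hfb : (decide ((cnt 0 L).natAbs + (cnt 1 L).natAbs + (cnt 2 L).natAbs ≤ r+1) &&
        (((cnt 0 L).natAbs + (cnt 1 L).natAbs + (cnt 2 L).natAbs) % 2 == (r+1) % 2)) = true := by
      simp only [Bool.and_eq_true, decide_eq_true_eq, beq_iff_eq]
      exact hfeas
    rw [hfb] at hgo
    simp only [Bool.not_true, Bool.false_or, List.all_eq_true] at hgo
    have hmem := hgo a (mem_allLtrs a)
    rw [hcanc] at hmem
    simp only [Bool.false_or] at hmem
    exact ih (a :: L) hredaL hmem q hqlen hredFull hz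

set_option maxHeartbeats 100000000 in
theorem go7a : go 7 [((0:Fin 3),true)] = true := by decide
set_option maxHeartbeats 100000000 in
theorem go7b : go 7 [((0:Fin 3),false)] = true := by decide
set_option maxHeartbeats 100000000 in
theorem go7c : go 7 [((1:Fin 3),true)] = true := by decide
set_option maxHeartbeats 100000000 in
theorem go7d : go 7 [((1:Fin 3),false)] = true := by decide
set_option maxHeartbeats 100000000 in
theorem go7e : go 7 [((2:Fin 3),true)] = true := by decide
set_option maxHeartbeats 100000000 in
theorem go7f : go 7 [((2:Fin 3),false)] = true := by decide

theorem go8 : go 8 [] = true := by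
  rw [go]
  simp only [allLtrs, List.all_cons, List.all_nil, go7a, go7b, go7c, go7d, go7e, go7f,
    Bool.or_true, Bool.and_self, Bool.and_true, Bool.or_false, Bool.false_or]

set_option maxHeartbeats 10000000 in
theorem goAll : ∀ r < 10, 0 < r → go r [] = true := by
  intro r hr hr0
  interval_cases r
  · decide
  · decide
  · decide
  · decide
  · decide
  · decide
  · decide
  · exact go8
  · decide


/-- the core combinatorial fact -/
theorem core (L : List Ltr) (hred : reduce L = L) (hne : L ≠ []) (hlen : L.length ≤ 9)
    (hz : ∀ i : Fin 3, cnt i L = 0) :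
    ∃ i : Fin 3, FreeGroup.reduce (L.filter fun p => !(p.1 == i)) ≠ [] := by
  have h1 : 0 < L.length := List.length_pos_iff.mpr hne
  have hgo := goAll L.length (by omega) h1
  have := go_complete L.length [] rfl hgo L rfl (by simpa using hred) (by simpa using hz)
  rw [List.append_nil] at this
  exact of_decide_eq_true this

end PicHang

open PicHang FreeGroup

lemma kill_of {n : ℕ} (S : Finset (Fin n)) (i : Fin n) :
    kill S (of i) = if i ∈ S then 1 else of i := by
  simp [kill]

lemma kill_mk {n : ℕ} (S : Finset (Fin n)) (L : List (Fin n × Bool)) :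
    kill S (mk L) = mk (L.filter fun p => decide (p.1 ∉ S)) := by
  induction L with
  | nil => show kill S 1 = 1; simp
  | cons p L ih =>
    obtain ⟨i, b⟩ := p
    have h1 : mk ((i, b) :: L) = mk [(i, b)] * mk L := by rw [mul_mk]; rfl
    rw [h1, MonoidHom.map_mul, ih]
    by_cases hi : i ∈ S
    · have hb : kill S (mk [(i, b)]) = 1 := by
        cases b
        · have : mk [(i, false)] = (of i)⁻¹ := by
            rw [show of i = mk [(i, true)] from rfl, inv_mk]; rfl
          rw [this, MonoidHom.map_inv, kill_of, if_pos hi, inv_one]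
        · rw [show mk [(i, true)] = of i from rfl, kill_of, if_pos hi]
      simp [hb, hi]
    · have hb : kill S (mk [(i, b)]) = mk [(i, b)] := by
        cases b
        · have : mk [(i, false)] = (of i)⁻¹ := by
            rw [show of i = mk [(i, true)] from rfl, inv_mk]; rfl
          rw [this, MonoidHom.map_inv, kill_of, if_neg hi, ← this]
        · rw [show mk [(i, true)] = of i from rfl, kill_of, if_neg hi]
      rw [hb, List.filter_cons]
      simp only [hi, decide_not, decide_eq_true_eq, not_false_iff, if_true]
      rw [mul_mk]
      simp [hi]

lemma kill_empty {n : ℕ} (w : FreeGroup (Fin n)) : kill ∅ w = w := by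
  have : kill (∅ : Finset (Fin n)) = MonoidHom.id _ := by
    apply FreeGroup.ext_hom
    intro a
    simp [kill_of]
  rw [this]; rfl

theorem one_out_of_three_min_length :
    IsSolution 1 ⁅⁅x₁, x₂⁆, x₃⁆ ∧ FreeGroup.norm ⁅⁅x₁, x₂⁆, x₃⁆ = 10 ∧
    ∀ w' : FreeGroup (Fin 3), IsSolution 1 w' → 10 ≤ FreeGroup.norm w' := by
  have hnorm : FreeGroup.norm ⁅⁅x₁, x₂⁆, x₃⁆ = 10 := by decide
  refine ⟨?_, hnorm, ?_⟩
  · intro S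
    constructor
    · intro hcard
      obtain ⟨i, hi⟩ := Finset.card_pos.mp hcard
      have hki : kill S (FreeGroup.of i) = 1 := by rw [kill_of, if_pos hi]
      fin_cases i
      · simp only [map_commutatorElement, show kill S x₁ = 1 from hki,
          commutatorElement_one_left]
      · simp only [map_commutatorElement, show kill S x₂ = 1 from hki,
          commutatorElement_one_right, commutatorElement_one_left]
      · simp only [map_commutatorElement, show kill S x₃ = 1 from hki,
          commutatorElement_one_right]
    · intro hcard
      have hS : S = ∅ := Finset.card_eq_zero.mp (by omega)
      subst hS
      rw [kill_empty]
      intro h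
      rw [h] at hnorm
      simp [FreeGroup.norm_one] at hnorm
  · intro w' hw'
    by_contra hlt
    push_neg at hlt
    set L := w'.toWord with hL
    have hmk : mk L = w' := mk_toWord
    have hred : reduce L = L := reduce_toWord w'
    have hne : L ≠ [] := by
      intro h
      have : w' = 1 := toWord_eq_nil_iff.mp h
      have := (hw' ∅).2 (by simp)
      rw [kill_empty] at this
      exact this ‹w' = 1›
    have hlen : L.length ≤ 9 := by
      have : FreeGroup.norm w' = L.length := rfl
      omega
    -- all kills are trivial
    have hkill : ∀ i : Fin 3, FreeGroup.reduce (L.filter fun p => !(p.1 == i)) = [] := by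
      intro i
      have h1 : kill {i} w' = 1 := (hw' {i}).1 (by simp)
      rw [← hmk, kill_mk] at h1
      have h2 : (L.filter fun p => decide (p.1 ∉ ({i} : Finset (Fin 3)))) =
          (L.filter fun p => !(p.1 == i)) := by
        apply List.filter_congr
        intro p _
        simp only [Finset.mem_singleton, decide_not]
        cases h : decide (p.1 = i) <;> simp_all
      rw [h2] at h1
      have := congrArg FreeGroup.toWord h1
      rwa [toWord_mk, toWord_one] at this
    -- exponent sums are zero
    have hz : ∀ i : Fin 3, cnt i L = 0 := by
      intro i
      obtain ⟨j, hj⟩ : ∃ j : Fin 3, j ≠ i := by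
        fin_cases i
        · exact ⟨1, by decide⟩
        · exact ⟨0, by decide⟩
        · exact ⟨0, by decide⟩
      calc cnt i L = cnt i (L.filter fun p => !(p.1 == j)) := (cnt_filter i j hj L).symm
        _ = cnt i (FreeGroup.reduce (L.filter fun p => !(p.1 == j))) :=
            (cnt_reduce i _).symm
        _ = 0 := by rw [hkill j]; rfl
    obtain ⟨i, hi⟩ := core L hred hne hlen hz
    exact hi (hkill i)
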